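/- Let k = 3 and ℓ ≥ 3. Let P ∈ F₂[x_1,x_2,x_3] be the polynomial whose coefficient on the monomial x_1^a x_2^b x_3^c equals binom(b'+c', c') mod 2 if a'+b'+c' = 2^ℓ−1 and c' ≥ 1, and equals 0 otherwise. Then D·P = N(ℓ,0). (This is the formula p_{ℓ,0} = ∑_{i≥j≥m>0, i+j+m=2^ℓ−1} binom(j+m,m)·m_{i,j,m} of Theorem 2.) -/

import Mathlib

open MvPolynomial

/-- `Vdm k t` is the determinant of the `k × k` matrix whose `(i, j)` entry is `xᵢ ^ t j`,
in `F₂[x₁, …, x_k]`. -/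
noncomputable def Vdm (k : ℕ) (t : Fin k → ℕ) : MvPolynomial (Fin k) (ZMod 2) :=
  Matrix.det (Matrix.of fun i j : Fin k => (X i : MvPolynomial (Fin k) (ZMod 2)) ^ t j)

/-- `D k = V(2^0, 2^1, …, 2^(k-1))`. -/
noncomputable def D (k : ℕ) : MvPolynomial (Fin k) (ZMod 2) :=
  Vdm k fun j => 2 ^ (j : ℕ)

/-- `N k ℓ j` is the Vandermonde determinant whose exponent tuple lists the 2-powers
`2^0, …, 2^(k-1)` with `2^j` omitted, followed by `2^ℓ`. -/
noncomputable def N (k ℓ j : ℕ) : MvPolynomial (Fin k) (ZMod 2) :=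
  Vdm k fun i =>
    if (i : ℕ) + 1 < k then (if (i : ℕ) < j then 2 ^ (i : ℕ) else 2 ^ ((i : ℕ) + 1))
    else 2 ^ ℓ

/- `G k m` is the sum of all monomials of total degree `m` in `x₁, …, x_k` in which
every nonzero exponent is a power of 2. -/
open Classical in
noncomputable def G (k m : ℕ) : MvPolynomial (Fin k) (ZMod 2) :=
  ∑ d : Fin k → Fin (m + 1),
    if (∑ i, (d i : ℕ)) = m ∧ ∀ i, (d i : ℕ) ≠ 0 → ∃ e, (d i : ℕ) = 2 ^ e then
      ∏ i, (X i : MvPolynomial (Fin k) (ZMod 2)) ^ (d i : ℕ)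
    else 0

/-- The nonincreasing rearrangement `(a', b', c')` of `(a, b, c)`. -/
def sort3 (a b c : ℕ) : ℕ × ℕ × ℕ :=
  (max a (max b c), a + b + c - max a (max b c) - min a (min b c), min a (min b c))


namespace Stmt5Aux

open Finset

abbrev R3 := MvPolynomial (Fin 3) (ZMod 2)

lemma char2 : CharP R3 2 := inferInstance

noncomputable def c0 : R3 :=
  X 0*(X 1)^2*(X 2)^4 + X 0*(X 1)^4*(X 2)^2 + (X 0)^2*X 1*(X 2)^4 + (X 0)^2*(X 1)^4*X 2
    + (X 0)^4*X 1*(X 2)^2 + (X 0)^4*(X 1)^2*X 2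
noncomputable def c1 : R3 :=
  (X 1)^2*(X 2)^4 + (X 1)^4*(X 2)^2 + X 0*X 1*(X 2)^4 + X 0*(X 1)^4*X 2 + (X 0)^2*(X 2)^4
    + (X 0)^2*(X 1)^2*(X 2)^2 + (X 0)^2*(X 1)^4 + (X 0)^4*(X 2)^2 + (X 0)^4*X 1*X 2 + (X 0)^4*(X 1)^2
noncomputable def c2 : R3 :=
  (X 2)^4 + (X 1)^2*(X 2)^2 + (X 1)^4 + X 0*X 1*(X 2)^2 + X 0*(X 1)^2*X 2 + (X 0)^2*(X 2)^2
    + (X 0)^2*X 1*X 2 + (X 0)^2*(X 1)^2 + (X 0)^4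

noncomputable def z1 : R3 := X 0
noncomputable def z2 : R3 := X 1
noncomputable def z3 : R3 := X 2
noncomputable def z4 : R3 := X 0 + X 1
noncomputable def z5 : R3 := X 0 + X 2
noncomputable def z6 : R3 := X 1 + X 2
noncomputable def z7 : R3 := X 0 + X 1 + X 2

set_option maxHeartbeats 1000000 in
lemma rel1 : z1^8 = c2*z1^4 + c1*z1^2 + c0*z1 := by
  have inst := char2; simp only [z1,c0,c1,c2]; ring_nf; reduce_mod_char!
set_option maxHeartbeats 1000000 in
lemma rel2 : z2^8 = c2*z2^4 + c1*z2^2 + c0*z2 := by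
  have inst := char2; simp only [z2,c0,c1,c2]; ring_nf; reduce_mod_char!
set_option maxHeartbeats 1000000 in
lemma rel3 : z3^8 = c2*z3^4 + c1*z3^2 + c0*z3 := by
  have inst := char2; simp only [z3,c0,c1,c2]; ring_nf; reduce_mod_char!
set_option maxHeartbeats 1000000 in
lemma rel4 : z4^8 = c2*z4^4 + c1*z4^2 + c0*z4 := by
  have inst := char2; simp only [z4,c0,c1,c2]; ring_nf; reduce_mod_char!
set_option maxHeartbeats 1000000 in
lemma rel5 : z5^8 = c2*z5^4 + c1*z5^2 + c0*z5 := by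
  have inst := char2; simp only [z5,c0,c1,c2]; ring_nf; reduce_mod_char!
set_option maxHeartbeats 1000000 in
lemma rel6 : z6^8 = c2*z6^4 + c1*z6^2 + c0*z6 := by
  have inst := char2; simp only [z6,c0,c1,c2]; ring_nf; reduce_mod_char!
set_option maxHeartbeats 1000000 in
lemma rel7 : z7^8 = c2*z7^4 + c1*z7^2 + c0*z7 := by
  have inst := char2; simp only [z7,c0,c1,c2]; ring_nf; reduce_mod_char!

lemma lift (m : ℕ) (z : R3) (hz : z^8 = c2*z^4 + c1*z^2 + c0*z) :
    z^(2^(m+3)) = c2^(2^m) * z^(2^(m+2)) + c1^(2^m) * z^(2^(m+1)) + c0^(2^m) * z^(2^m) := by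
  have h := congrArg (iterateFrobenius R3 2 m) hz
  simp only [map_add, map_mul, map_pow, iterateFrobenius_def] at h
  have e3 : (2:ℕ)^(m+3) = 2^m * 8 := by ring
  have e2 : (2:ℕ)^(m+2) = 2^m * 4 := by ring
  have e1 : (2:ℕ)^(m+1) = 2^m * 2 := by ring
  rw [e3, e2, e1, pow_mul, pow_mul, pow_mul]
  exact h

noncomputable def pr1 : R3 := z2*z3*z4*z5*z6*z7
noncomputable def pr2 : R3 := z1*z3*z4*z5*z6*z7
noncomputable def pr3 : R3 := z1*z2*z4*z5*z6*z7
noncomputable def pr4 : R3 := z1*z2*z3*z5*z6*z7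
noncomputable def pr5 : R3 := z1*z2*z3*z4*z6*z7
noncomputable def pr6 : R3 := z1*z2*z3*z4*z5*z7
noncomputable def pr7 : R3 := z1*z2*z3*z4*z5*z6

noncomputable def W (m : ℕ) : R3 :=
  z1^(2^m)*pr1 + z2^(2^m)*pr2 + z3^(2^m)*pr3 + z4^(2^m)*pr4 + z5^(2^m)*pr5
    + z6^(2^m)*pr6 + z7^(2^m)*pr7

noncomputable def K0 : R3 := (X 1)^2*(X 2)^4 + (X 1)^4*(X 2)^2
noncomputable def K1 : R3 := (X 0)^2*(X 2)^4 + (X 0)^4*(X 2)^2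
noncomputable def K2 : R3 := (X 0)^2*(X 1)^4 + (X 0)^4*(X 1)^2

noncomputable def U (m : ℕ) : R3 := z1^(2^m)*K0 + z2^(2^m)*K1 + z3^(2^m)*K2

lemma Wrec (m : ℕ) : W (m+3) = c2^(2^m)*W (m+2) + c1^(2^m)*W (m+1) + c0^(2^m)*W m := by
  simp only [W]
  rw [lift m z1 rel1, lift m z2 rel2, lift m z3 rel3, lift m z4 rel4, lift m z5 rel5,
    lift m z6 rel6, lift m z7 rel7]
  ring

lemma Urec (m : ℕ) : U (m+3) = c2^(2^m)*U (m+2) + c1^(2^m)*U (m+1) + c0^(2^m)*U m := by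
  simp only [U]
  rw [lift m z1 rel1, lift m z2 rel2, lift m z3 rel3]
  ring

set_option maxHeartbeats 2000000 in
lemma base0 : W 0 = U 0 := by
  have inst := char2
  simp only [W, U, pr1, pr2, pr3, pr4, pr5, pr6, pr7, K0, K1, K2, z1, z2, z3, z4, z5, z6, z7]
  norm_num
  ring_nf; reduce_mod_char!

set_option maxHeartbeats 2000000 in
lemma base1 : W 1 = U 1 := by
  have inst := char2
  simp only [W, U, pr1, pr2, pr3, pr4, pr5, pr6, pr7, K0, K1, K2, z1, z2, z3, z4, z5, z6, z7]
  norm_num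
  ring_nf; reduce_mod_char!

set_option maxHeartbeats 4000000 in
lemma base2 : W 2 = U 2 := by
  have inst := char2
  simp only [W, U, pr1, pr2, pr3, pr4, pr5, pr6, pr7, K0, K1, K2, z1, z2, z3, z4, z5, z6, z7]
  norm_num
  ring_nf; reduce_mod_char!

lemma WU : ∀ m, W m = U m := by
  have key : ∀ m, W m = U m ∧ W (m+1) = U (m+1) ∧ W (m+2) = U (m+2) := by
    intro m
    induction m with
    | zero => exact ⟨base0, base1, base2⟩
    | succ n ih =>
      refine ⟨ih.2.1, ih.2.2, ?_⟩
      have : n + 1 + 2 = n + 3 := rfl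
      rw [this, Wrec, Urec, ih.1, ih.2.1, ih.2.2]
  exact fun m => (key m).1

set_option maxHeartbeats 1000000 in
lemma Dexp : D 3 = z1*z2*z3*z4*z5*z6*z7 := by
  have inst := char2
  simp only [D, Vdm, Matrix.det_fin_three, Matrix.of_apply, z1, z2, z3, z4, z5, z6, z7]
  norm_num
  ring_nf; reduce_mod_char!

set_option maxHeartbeats 1000000 in
lemma NtoU (ℓ : ℕ) : N 3 ℓ 0 = U ℓ := by
  have inst := char2
  simp only [N, Vdm, Matrix.det_fin_three, Matrix.of_apply, U, K0, K1, K2, z1, z2, z3]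
  norm_num
  ring_nf; reduce_mod_char!

lemma Dmul (ℓ : ℕ) :
    D 3 * (z1^(2^ℓ-1) + z2^(2^ℓ-1) + z3^(2^ℓ-1) + z4^(2^ℓ-1) + z5^(2^ℓ-1) + z6^(2^ℓ-1)
      + z7^(2^ℓ-1)) = N 3 ℓ 0 := by
  have hz : ∀ z : R3, z^(2^ℓ-1)*z = z^(2^ℓ) := fun z => by
    rw [← pow_succ, Nat.sub_add_cancel Nat.one_le_two_pow]
  rw [Dexp, NtoU, ← WU]
  calc z1*z2*z3*z4*z5*z6*z7 * (z1^(2^ℓ-1) + z2^(2^ℓ-1) + z3^(2^ℓ-1) + z4^(2^ℓ-1) + z5^(2^ℓ-1)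
      + z6^(2^ℓ-1) + z7^(2^ℓ-1))
      = (z1^(2^ℓ-1)*z1)*pr1 + (z2^(2^ℓ-1)*z2)*pr2 + (z3^(2^ℓ-1)*z3)*pr3 + (z4^(2^ℓ-1)*z4)*pr4
        + (z5^(2^ℓ-1)*z5)*pr5 + (z6^(2^ℓ-1)*z6)*pr6 + (z7^(2^ℓ-1)*z7)*pr7 := by
        simp only [pr1, pr2, pr3, pr4, pr5, pr6, pr7]; ring
    _ = W ℓ := by simp only [hz, W]


lemma lucas_step (n k : ℕ) : ((n.choose k : ZMod 2)) =
    ((n % 2).choose (k % 2) : ℕ) * ((n / 2).choose (k / 2) : ℕ) := by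
  haveI : Fact (Nat.Prime 2) := ⟨Nat.prime_two⟩
  have h := Choose.choose_modEq_choose_mod_mul_choose_div_nat (p := 2) (n := n) (k := k)
  have := (ZMod.natCast_eq_natCast_iff _ _ _).mpr h
  push_cast at this ⊢
  exact this

lemma NT1 : ∀ ℓ a : ℕ, a ≤ 2^ℓ - 1 → (((2^ℓ-1).choose a : ℕ) : ZMod 2) = 1 := by
  intro ℓ
  induction ℓ with
  | zero => intro a h; interval_cases a <;> simp
  | succ n ih =>
    intro a h
    have e : (2:ℕ)^(n+1) = 2*2^n := by ring
    have e0 : (1:ℕ) ≤ 2^n := Nat.one_le_two_pow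
    have h1 : (2^(n+1)-1) % 2 = 1 := by omega
    have h2 : (2^(n+1)-1) / 2 = 2^n - 1 := by omega
    rw [lucas_step, h1, h2]
    have ha : a % 2 = 0 ∨ a % 2 = 1 := by omega
    have hd := ih (a/2) (by omega)
    rcases ha with ha | ha <;> rw [ha] <;> push_cast at hd ⊢ <;> rw [hd] <;> norm_num

lemma NT2 : ∀ ℓ a b c : ℕ, a + b + c = 2^ℓ - 1 →
    (((a+b).choose a : ℕ) : ZMod 2) = (((b+c).choose c : ℕ) : ZMod 2) := by
  intro ℓ
  induction ℓ with
  | zero =>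
    intro a b c h
    simp only [pow_zero] at h
    obtain ⟨rfl, rfl, rfl⟩ : a = 0 ∧ b = 0 ∧ c = 0 := by omega
    simp
  | succ n ih =>
    intro a b c h
    have e : (2:ℕ)^(n+1) = 2*2^n := by ring
    have e0 : (1:ℕ) ≤ 2^n := Nat.one_le_two_pow
    have ha : a % 2 = 0 ∨ a % 2 = 1 := by omega
    have hb : b % 2 = 0 ∨ b % 2 = 1 := by omega
    have hc : c % 2 = 0 ∨ c % 2 = 1 := by omega
    have hih := ih (a/2) (b/2) (c/2)
    rw [lucas_step (a+b) a, lucas_step (b+c) c]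
    rcases ha with ha | ha <;> rcases hb with hb | hb <;> rcases hc with hc | hc
    -- 8 cases; four impossible by parity
    · omega
    · -- c odd only
      have p1 : (a+b) % 2 = 0 := by omega
      have p2 : (b+c) % 2 = 1 := by omega
      have q1 : (a+b)/2 = a/2 + b/2 := by omega
      have q2 : (b+c)/2 = b/2 + c/2 := by omega
      rw [p1, p2, ha, hc, q1, q2, hih (by omega)]
      norm_num
    · -- b odd only
      have p1 : (a+b) % 2 = 1 := by omega
      have p2 : (b+c) % 2 = 1 := by omega
      have q1 : (a+b)/2 = a/2 + b/2 := by omega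
      have q2 : (b+c)/2 = b/2 + c/2 := by omega
      rw [p1, p2, ha, hc, q1, q2, hih (by omega)]
    · omega
    · -- a odd only
      have p1 : (a+b) % 2 = 1 := by omega
      have p2 : (b+c) % 2 = 0 := by omega
      have q1 : (a+b)/2 = a/2 + b/2 := by omega
      have q2 : (b+c)/2 = b/2 + c/2 := by omega
      rw [p1, p2, ha, hc, q1, q2, hih (by omega)]
      norm_num
    · omega
    · omega
    · -- all odd
      have p1 : (a+b) % 2 = 0 := by omega
      have p2 : (b+c) % 2 = 0 := by omega
      rw [p1, p2, ha, hc]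
      norm_num

lemma chsymm (u v : ℕ) : ((u+v).choose u : ℕ) = ((u+v).choose v : ℕ) := Nat.choose_symm_add


noncomputable def dd (a b c : ℕ) : Fin 3 →₀ ℕ :=
  Finsupp.single 0 a + Finsupp.single 1 b + Finsupp.single 2 c

lemma tripleEq {a b c a' b' c' : ℕ} : dd a b c = dd a' b' c' ↔ a = a' ∧ b = b' ∧ c = c' := by
  constructor
  · intro h
    refine ⟨?_, ?_, ?_⟩
    · have := congrArg (fun f => f 0) h
      simpa [dd, Finsupp.single_apply] using this
    · have := congrArg (fun f => f 1) h
      simpa [dd, Finsupp.single_apply] using this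
    · have := congrArg (fun f => f 2) h
      simpa [dd, Finsupp.single_apply] using this
  · rintro ⟨rfl, rfl, rfl⟩; rfl

lemma represent (f : Fin 3 →₀ ℕ) : f = dd (f 0) (f 1) (f 2) := by
  ext i
  fin_cases i <;> simp [dd, Finsupp.single_apply]

lemma mono3 (k m r : ℕ) : (X 0 : R3)^k * (X 1)^m * (X 2)^r = monomial (dd k m r) 1 := by
  rw [X_pow_eq_monomial, X_pow_eq_monomial, X_pow_eq_monomial, monomial_mul, monomial_mul, dd]
  norm_num

lemma coeff_sing0 (T a b c : ℕ) :
    coeff (dd a b c) ((X 0 : R3)^T) = if a = T ∧ b = 0 ∧ c = 0 then 1 else 0 := by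
  rw [coeff_X_pow]
  have h : Finsupp.single (0 : Fin 3) T = dd T 0 0 := by simp [dd]
  rw [h]
  by_cases H : a = T ∧ b = 0 ∧ c = 0
  · rw [if_pos H, if_pos]; exact tripleEq.mpr ⟨H.1.symm, H.2.1.symm, H.2.2.symm⟩
  · rw [if_neg H, if_neg]
    intro hc
    obtain ⟨h1, h2, h3⟩ := tripleEq.mp hc
    exact H ⟨h1.symm, h2.symm, h3.symm⟩

lemma coeff_sing1 (T a b c : ℕ) :
    coeff (dd a b c) ((X 1 : R3)^T) = if b = T ∧ a = 0 ∧ c = 0 then 1 else 0 := by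
  rw [coeff_X_pow]
  have h : Finsupp.single (1 : Fin 3) T = dd 0 T 0 := by simp [dd]
  rw [h]
  by_cases H : b = T ∧ a = 0 ∧ c = 0
  · rw [if_pos H, if_pos]; exact tripleEq.mpr ⟨H.2.1.symm, H.1.symm, H.2.2.symm⟩
  · rw [if_neg H, if_neg]
    intro hc
    obtain ⟨h1, h2, h3⟩ := tripleEq.mp hc
    exact H ⟨h2.symm, h1.symm, h3.symm⟩

lemma coeff_sing2 (T a b c : ℕ) :
    coeff (dd a b c) ((X 2 : R3)^T) = if c = T ∧ a = 0 ∧ b = 0 then 1 else 0 := by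
  rw [coeff_X_pow]
  have h : Finsupp.single (2 : Fin 3) T = dd 0 0 T := by simp [dd]
  rw [h]
  by_cases H : c = T ∧ a = 0 ∧ b = 0
  · rw [if_pos H, if_pos]; exact tripleEq.mpr ⟨H.2.1.symm, H.2.2.symm, H.1.symm⟩
  · rw [if_neg H, if_neg]
    intro hc
    obtain ⟨h1, h2, h3⟩ := tripleEq.mp hc
    exact H ⟨h3.symm, h1.symm, h2.symm⟩

lemma pair_expand01 (T : ℕ) : (X 0 + X 1 : R3)^T =
    ∑ k ∈ range (T+1), monomial (dd k (T-k) 0) ((T.choose k : ℕ) : ZMod 2) := by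
  rw [add_pow]
  refine Finset.sum_congr rfl fun k _ => ?_
  have h : (X 0:R3)^k * (X 1)^(T-k) * C ((T.choose k : ℕ) : ZMod 2)
      = monomial (dd k (T-k) 0) ((T.choose k : ℕ) : ZMod 2) := by
    rw [X_pow_eq_monomial, X_pow_eq_monomial, monomial_mul, C_apply, monomial_mul, dd]
    simp
  rw [← map_natCast (C : ZMod 2 →+* R3) (T.choose k), h]

lemma pair_expand02 (T : ℕ) : (X 0 + X 2 : R3)^T =
    ∑ k ∈ range (T+1), monomial (dd k 0 (T-k)) ((T.choose k : ℕ) : ZMod 2) := by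
  rw [add_pow]
  refine Finset.sum_congr rfl fun k _ => ?_
  have h : (X 0:R3)^k * (X 2)^(T-k) * C ((T.choose k : ℕ) : ZMod 2)
      = monomial (dd k 0 (T-k)) ((T.choose k : ℕ) : ZMod 2) := by
    rw [X_pow_eq_monomial, X_pow_eq_monomial, monomial_mul, C_apply, monomial_mul, dd]
    simp [add_assoc]
  rw [← map_natCast (C : ZMod 2 →+* R3) (T.choose k), h]

lemma pair_expand12 (T : ℕ) : (X 1 + X 2 : R3)^T =
    ∑ k ∈ range (T+1), monomial (dd 0 k (T-k)) ((T.choose k : ℕ) : ZMod 2) := by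
  rw [add_pow]
  refine Finset.sum_congr rfl fun k _ => ?_
  have h : (X 1:R3)^k * (X 2)^(T-k) * C ((T.choose k : ℕ) : ZMod 2)
      = monomial (dd 0 k (T-k)) ((T.choose k : ℕ) : ZMod 2) := by
    rw [X_pow_eq_monomial, X_pow_eq_monomial, monomial_mul, C_apply, monomial_mul, dd]
    simp [add_assoc]
  rw [← map_natCast (C : ZMod 2 →+* R3) (T.choose k), h]

lemma coeff_pair01 (T a b c : ℕ) :
    coeff (dd a b c) ((X 0 + X 1 : R3)^T) =
      if a + b = T ∧ c = 0 then ((T.choose a : ℕ) : ZMod 2) else 0 := by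
  rw [pair_expand01, coeff_sum]
  simp only [coeff_monomial]
  by_cases H : a + b = T ∧ c = 0
  · rw [if_pos H, Finset.sum_eq_single a]
    · rw [if_pos (tripleEq.mpr ⟨rfl, by omega, H.2.symm⟩)]
    · intro k _ hne
      rw [if_neg]
      intro hc; exact hne (tripleEq.mp hc).1
    · intro hna; exact absurd (mem_range.mpr (by omega)) hna
  · rw [if_neg H]
    apply Finset.sum_eq_zero
    intro k hk
    rw [if_neg]
    intro hc
    obtain ⟨h1, h2, h3⟩ := tripleEq.mp hc
    have hk' : k < T + 1 := mem_range.mp hk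
    exact H ⟨by omega, h3.symm⟩

lemma coeff_pair02 (T a b c : ℕ) :
    coeff (dd a b c) ((X 0 + X 2 : R3)^T) =
      if a + c = T ∧ b = 0 then ((T.choose a : ℕ) : ZMod 2) else 0 := by
  rw [pair_expand02, coeff_sum]
  simp only [coeff_monomial]
  by_cases H : a + c = T ∧ b = 0
  · rw [if_pos H, Finset.sum_eq_single a]
    · rw [if_pos (tripleEq.mpr ⟨rfl, H.2.symm, by omega⟩)]
    · intro k _ hne
      rw [if_neg]
      intro hc; exact hne (tripleEq.mp hc).1
    · intro hna; exact absurd (mem_range.mpr (by omega)) hna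
  · rw [if_neg H]
    apply Finset.sum_eq_zero
    intro k hk
    rw [if_neg]
    intro hc
    obtain ⟨h1, h2, h3⟩ := tripleEq.mp hc
    have hk' : k < T + 1 := mem_range.mp hk
    exact H ⟨by omega, h2.symm⟩

lemma coeff_pair12 (T a b c : ℕ) :
    coeff (dd a b c) ((X 1 + X 2 : R3)^T) =
      if b + c = T ∧ a = 0 then ((T.choose b : ℕ) : ZMod 2) else 0 := by
  rw [pair_expand12, coeff_sum]
  simp only [coeff_monomial]
  by_cases H : b + c = T ∧ a = 0
  · rw [if_pos H, Finset.sum_eq_single b]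
    · rw [if_pos (tripleEq.mpr ⟨H.2.symm, rfl, by omega⟩)]
    · intro k _ hne
      rw [if_neg]
      intro hc; exact hne (tripleEq.mp hc).2.1
    · intro hna; exact absurd (mem_range.mpr (by omega)) hna
  · rw [if_neg H]
    apply Finset.sum_eq_zero
    intro k hk
    rw [if_neg]
    intro hc
    obtain ⟨h1, h2, h3⟩ := tripleEq.mp hc
    have hk' : k < T + 1 := mem_range.mp hk
    exact H ⟨by omega, h1.symm⟩

lemma dd_add2 (j m r : ℕ) : dd j m 0 + Finsupp.single 2 r = dd j m r := by
  simp [dd, add_assoc]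

lemma tri_expand (T : ℕ) : (X 0 + X 1 + X 2 : R3)^T =
    ∑ k ∈ range (T+1), ∑ j ∈ range (k+1),
      monomial (dd j (k-j) (T-k))
        (((T.choose k : ℕ) : ZMod 2) * ((k.choose j : ℕ) : ZMod 2)) := by
  rw [add_pow]
  refine Finset.sum_congr rfl fun k _ => ?_
  rw [pair_expand01, Finset.sum_mul, Finset.sum_mul]
  refine Finset.sum_congr rfl fun j _ => ?_
  rw [← map_natCast (C : ZMod 2 →+* R3) (T.choose k), X_pow_eq_monomial, monomial_mul,
    C_apply, monomial_mul, dd_add2]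
  rw [add_zero]
  congr 1
  ring

lemma coeff_tri (T a b c : ℕ) :
    coeff (dd a b c) ((X 0 + X 1 + X 2 : R3)^T) =
      if a + b + c = T then
        ((T.choose (a+b) : ℕ) : ZMod 2) * (((a+b).choose a : ℕ) : ZMod 2)
      else 0 := by
  rw [tri_expand, coeff_sum]
  simp only [coeff_sum, coeff_monomial]
  by_cases H : a + b + c = T
  · rw [if_pos H, Finset.sum_eq_single (a+b)]
    · rw [Finset.sum_eq_single a]
      · rw [if_pos (tripleEq.mpr ⟨rfl, by omega, by omega⟩)]
      · intro j _ hne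
        rw [if_neg]
        intro hc; exact hne (tripleEq.mp hc).1
      · intro hna; exact absurd (mem_range.mpr (by omega)) hna
    · intro k hk hne
      apply Finset.sum_eq_zero
      intro j hj
      rw [if_neg]
      intro hc
      obtain ⟨h1, h2, h3⟩ := tripleEq.mp hc
      have hj' : j < k + 1 := mem_range.mp hj
      exact hne (by omega)
    · intro hna; exact absurd (mem_range.mpr (by omega)) hna
  · rw [if_neg H]
    apply Finset.sum_eq_zero
    intro k hk
    apply Finset.sum_eq_zero
    intro j hj
    rw [if_neg]
    intro hc
    obtain ⟨h1, h2, h3⟩ := tripleEq.mp hc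
    have hk' : k < T + 1 := mem_range.mp hk
    have hj' : j < k + 1 := mem_range.mp hj
    exact H (by omega)

lemma sortmatch (ℓ a b c : ℕ) (h : a + b + c = 2^ℓ - 1) :
    (((a+b).choose a : ℕ) : ZMod 2) =
      ((((a + b + c - max a (max b c) - min a (min b c)) + min a (min b c)).choose
        (min a (min b c)) : ℕ) : ZMod 2) := by
  rcases le_total a b with h1 | h1 <;> rcases le_total b c with h2 | h2 <;>
    rcases le_total a c with h3 | h3
  · have hmid : a + b + c - max a (max b c) - min a (min b c) = b := by omega
    have hmin : min a (min b c) = a := by omega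
    rw [hmid, hmin, Nat.add_comm b a]
  · have hmid : a + b + c - max a (max b c) - min a (min b c) = b := by omega
    have hmin : min a (min b c) = a := by omega
    rw [hmid, hmin, Nat.add_comm b a]
  · have hmid : a + b + c - max a (max b c) - min a (min b c) = c := by omega
    have hmin : min a (min b c) = a := by omega
    rw [hmid, hmin]
    rw [(Nat.choose_symm_add : (a+b).choose a = (a+b).choose b), Nat.add_comm a b,
      NT2 ℓ b a c (by omega),
      (Nat.choose_symm_add : (a+c).choose a = (a+c).choose c).symm, Nat.add_comm a c]
  · have hmid : a + b + c - max a (max b c) - min a (min b c) = a := by omega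
    have hmin : min a (min b c) = c := by omega
    rw [hmid, hmin]
    rw [(Nat.choose_symm_add : (a+b).choose a = (a+b).choose b), Nat.add_comm a b,
      NT2 ℓ b a c (by omega)]
  · have hmid : a + b + c - max a (max b c) - min a (min b c) = a := by omega
    have hmin : min a (min b c) = b := by omega
    rw [hmid, hmin, (Nat.choose_symm_add : (a+b).choose a = (a+b).choose b)]
  · have hmid : a + b + c - max a (max b c) - min a (min b c) = c := by omega
    have hmin : min a (min b c) = b := by omega
    rw [hmid, hmin, NT2 ℓ a b c h,
      (Nat.choose_symm_add : (b+c).choose b = (b+c).choose c).symm, Nat.add_comm b c]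
  · have hmid : a + b + c - max a (max b c) - min a (min b c) = c := by omega
    have hmin : min a (min b c) = b := by omega
    rw [hmid, hmin, NT2 ℓ a b c h,
      (Nat.choose_symm_add : (b+c).choose b = (b+c).choose c).symm, Nat.add_comm b c]
  · have hmid : a + b + c - max a (max b c) - min a (min b c) = b := by omega
    have hmin : min a (min b c) = c := by omega
    rw [hmid, hmin, NT2 ℓ a b c h]

lemma Pcoeff (ℓ a b c : ℕ) (hl : 3 ≤ ℓ) :
    coeff (dd a b c) ((X 0:R3)^(2^ℓ-1) + (X 1:R3)^(2^ℓ-1) + (X 2:R3)^(2^ℓ-1)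
      + (X 0 + X 1 : R3)^(2^ℓ-1) + (X 0 + X 2 : R3)^(2^ℓ-1) + (X 1 + X 2 : R3)^(2^ℓ-1)
      + (X 0 + X 1 + X 2 : R3)^(2^ℓ-1)) =
    if a + b + c = 2 ^ ℓ - 1 ∧ 1 ≤ (sort3 a b c).2.2 then
      (Nat.choose ((sort3 a b c).2.1 + (sort3 a b c).2.2) (sort3 a b c).2.2 : ZMod 2)
    else 0 := by
  have hT7 : 7 ≤ 2^ℓ - 1 := by
    have h8 : (8:ℕ) ≤ 2^ℓ := by
      calc (8:ℕ) = 2^3 := rfl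
        _ ≤ 2^ℓ := Nat.pow_le_pow_right (by norm_num) hl
    omega
  rw [show sort3 a b c = (max a (max b c), a + b + c - max a (max b c) - min a (min b c),
    min a (min b c)) from rfl]
  simp only [coeff_add, coeff_sing0, coeff_sing1, coeff_sing2, coeff_pair01, coeff_pair02,
    coeff_pair12, coeff_tri, sort3]
  by_cases hsum : a + b + c = 2^ℓ - 1
  · have e1 := NT1 ℓ a (by omega)
    have e2 := NT1 ℓ b (by omega)
    have e3 := NT1 ℓ (a+b) (by omega)
    rw [e1, e2, e3]
    by_cases hmin : 1 ≤ min a (min b c)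
    · have ha : 1 ≤ a := by omega
      have hb : 1 ≤ b := by omega
      have hc : 1 ≤ c := by omega
      rw [if_neg (show ¬(a = 2^ℓ-1 ∧ b = 0 ∧ c = 0) by omega),
        if_neg (show ¬(b = 2^ℓ-1 ∧ a = 0 ∧ c = 0) by omega),
        if_neg (show ¬(c = 2^ℓ-1 ∧ a = 0 ∧ b = 0) by omega),
        if_neg (show ¬(a + b = 2^ℓ-1 ∧ c = 0) by omega),
        if_neg (show ¬(a + c = 2^ℓ-1 ∧ b = 0) by omega),
        if_neg (show ¬(b + c = 2^ℓ-1 ∧ a = 0) by omega),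
        if_pos (show a + b + c = 2^ℓ-1 from hsum),
        if_pos (show a + b + c = 2^ℓ-1 ∧ 1 ≤ min a (min b c) from ⟨hsum, hmin⟩),
        ← sortmatch ℓ a b c hsum]
      ring
    · rw [if_neg (show ¬(a + b + c = 2^ℓ-1 ∧ 1 ≤ min a (min b c)) by omega)]
      by_cases ha0 : a = 0
      · subst ha0
        by_cases hb0 : b = 0
        · subst hb0
          -- (0,0,c) with c = T
          rw [if_neg (show ¬((0:ℕ) = 2^ℓ-1 ∧ (0:ℕ) = 0 ∧ c = 0) by omega),
            if_pos (show c = 2^ℓ-1 ∧ (0:ℕ) = 0 ∧ (0:ℕ) = 0 by omega),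
            if_neg (show ¬((0:ℕ) + 0 = 2^ℓ-1 ∧ c = 0) by omega),
            if_pos (show (0:ℕ) + c = 2^ℓ-1 ∧ (0:ℕ) = 0 by omega),
            if_pos (show (0:ℕ) + 0 + c = 2^ℓ-1 from hsum)]
          rw [Nat.choose_zero_right, Nat.cast_one]
          decide
        · by_cases hc0 : c = 0
          · subst hc0
            -- (0,b,0) with b = T
            rw [if_neg (show ¬((0:ℕ) = 2^ℓ-1 ∧ b = 0 ∧ (0:ℕ) = 0) by omega),
              if_pos (show b = 2^ℓ-1 ∧ (0:ℕ) = 0 ∧ (0:ℕ) = 0 by omega),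
              if_neg (show ¬((0:ℕ) = 2^ℓ-1 ∧ (0:ℕ) = 0 ∧ b = 0) by omega),
              if_pos (show (0:ℕ) + b = 2^ℓ-1 ∧ (0:ℕ) = 0 by omega),
              if_neg (show ¬((0:ℕ) + 0 = 2^ℓ-1 ∧ b = 0) by omega),
              if_pos (show b + 0 = 2^ℓ-1 ∧ (0:ℕ) = 0 by omega),
              if_pos (show (0:ℕ) + b + 0 = 2^ℓ-1 from hsum)]
            rw [Nat.zero_add, Nat.choose_zero_right, Nat.cast_one]
            decide
          · -- (0,b,c), b,c ≥ 1
            rw [if_neg (show ¬((0:ℕ) = 2^ℓ-1 ∧ b = 0 ∧ c = 0) by omega),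
              if_neg (show ¬(b = 2^ℓ-1 ∧ (0:ℕ) = 0 ∧ c = 0) by omega),
              if_neg (show ¬(c = 2^ℓ-1 ∧ (0:ℕ) = 0 ∧ b = 0) by omega),
              if_neg (show ¬((0:ℕ) + b = 2^ℓ-1 ∧ c = 0) by omega),
              if_neg (show ¬((0:ℕ) + c = 2^ℓ-1 ∧ b = 0) by omega),
              if_pos (show b + c = 2^ℓ-1 ∧ (0:ℕ) = 0 by omega),
              if_pos (show (0:ℕ) + b + c = 2^ℓ-1 from hsum)]
            rw [Nat.zero_add, Nat.choose_zero_right, Nat.cast_one]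
            decide
      · by_cases hb0 : b = 0
        · subst hb0
          by_cases hc0 : c = 0
          · subst hc0
            -- (a,0,0) with a = T
            rw [if_pos (show a = 2^ℓ-1 ∧ (0:ℕ) = 0 ∧ (0:ℕ) = 0 by omega),
              if_neg (show ¬((0:ℕ) = 2^ℓ-1 ∧ a = 0 ∧ (0:ℕ) = 0) by omega),
              if_pos (show a + 0 = 2^ℓ-1 ∧ (0:ℕ) = 0 by omega),
              if_neg (show ¬((0:ℕ) + 0 = 2^ℓ-1 ∧ a = 0) by omega),
              if_pos (show a + 0 + 0 = 2^ℓ-1 from hsum)]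
            rw [Nat.add_zero, Nat.choose_self, Nat.cast_one]
            decide
          · -- (a,0,c), a,c ≥ 1
            rw [if_neg (show ¬(a = 2^ℓ-1 ∧ (0:ℕ) = 0 ∧ c = 0) by omega),
              if_neg (show ¬((0:ℕ) = 2^ℓ-1 ∧ a = 0 ∧ c = 0) by omega),
              if_neg (show ¬(c = 2^ℓ-1 ∧ a = 0 ∧ (0:ℕ) = 0) by omega),
              if_neg (show ¬(a + 0 = 2^ℓ-1 ∧ c = 0) by omega),
              if_pos (show a + c = 2^ℓ-1 ∧ (0:ℕ) = 0 by omega),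
              if_neg (show ¬((0:ℕ) + c = 2^ℓ-1 ∧ a = 0) by omega),
              if_pos (show a + 0 + c = 2^ℓ-1 from hsum)]
            rw [Nat.add_zero, Nat.choose_self, Nat.cast_one]
            decide
        · -- a,b ≥ 1, so c = 0
          have hc0 : c = 0 := by omega
          subst hc0
          rw [if_neg (show ¬(a = 2^ℓ-1 ∧ b = 0 ∧ (0:ℕ) = 0) by omega),
            if_neg (show ¬(b = 2^ℓ-1 ∧ a = 0 ∧ (0:ℕ) = 0) by omega),
            if_neg (show ¬((0:ℕ) = 2^ℓ-1 ∧ a = 0 ∧ b = 0) by omega),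
            if_pos (show a + b = 2^ℓ-1 ∧ (0:ℕ) = 0 by omega),
            if_neg (show ¬(a + 0 = 2^ℓ-1 ∧ b = 0) by omega),
            if_neg (show ¬(b + 0 = 2^ℓ-1 ∧ a = 0) by omega),
            if_pos (show a + b + 0 = 2^ℓ-1 from hsum),
            show a + b = 2^ℓ-1 by omega, e1]
          decide
  · rw [if_neg (show ¬(a = 2^ℓ-1 ∧ b = 0 ∧ c = 0) by omega),
      if_neg (show ¬(b = 2^ℓ-1 ∧ a = 0 ∧ c = 0) by omega),
      if_neg (show ¬(c = 2^ℓ-1 ∧ a = 0 ∧ b = 0) by omega),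
      if_neg (show ¬(a + b = 2^ℓ-1 ∧ c = 0) by omega),
      if_neg (show ¬(a + c = 2^ℓ-1 ∧ b = 0) by omega),
      if_neg (show ¬(b + c = 2^ℓ-1 ∧ a = 0) by omega),
      if_neg (show ¬(a + b + c = 2^ℓ-1) from hsum),
      if_neg (show ¬(a + b + c = 2^ℓ-1 ∧ 1 ≤ min a (min b c)) by omega)]
    norm_num

end Stmt5Aux

theorem stmt5 (ℓ : ℕ) (hℓ : 3 ≤ ℓ) (P : MvPolynomial (Fin 3) (ZMod 2))
    (hP : ∀ a b c : ℕ,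
      P.coeff (Finsupp.single 0 a + Finsupp.single 1 b + Finsupp.single 2 c) =
        if a + b + c = 2 ^ ℓ - 1 ∧ 1 ≤ (sort3 a b c).2.2 then
          (Nat.choose ((sort3 a b c).2.1 + (sort3 a b c).2.2) (sort3 a b c).2.2 : ZMod 2)
        else 0) :
    D 3 * P = N 3 ℓ 0 := by
  classical
  have hPsum : P = (X 0 : Stmt5Aux.R3)^(2^ℓ-1) + (X 1 : Stmt5Aux.R3)^(2^ℓ-1)
      + (X 2 : Stmt5Aux.R3)^(2^ℓ-1)
      + (X 0 + X 1 : Stmt5Aux.R3)^(2^ℓ-1) + (X 0 + X 2 : Stmt5Aux.R3)^(2^ℓ-1)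
      + (X 1 + X 2 : Stmt5Aux.R3)^(2^ℓ-1)
      + (X 0 + X 1 + X 2 : Stmt5Aux.R3)^(2^ℓ-1) := by
    apply MvPolynomial.ext
    intro f
    have hrep := Stmt5Aux.represent f
    rw [hrep, Stmt5Aux.Pcoeff ℓ (f 0) (f 1) (f 2) hℓ]
    exact hP (f 0) (f 1) (f 2)
  rw [hPsum]
  have h := Stmt5Aux.Dmul ℓ
  simp only [Stmt5Aux.z1, Stmt5Aux.z2, Stmt5Aux.z3, Stmt5Aux.z4, Stmt5Aux.z5,
    Stmt5Aux.z6, Stmt5Aux.z7] at h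
  exact h
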